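/- arXiv:1005.0150 — 2 statements merged into one kernel-verified Lean document; each statement's English description precedes it below -/
import Mathlib

section
/- If M = (M_t)_{t∈ℝ} is an increment martingale with respect to a filtration (F_t)_{t∈ℝ} and τ is a stopping time bounded below by some s₀ ∈ ℝ, then the process (M_t − M_{t∧τ})_{t∈ℝ} is a martingale. -/
open MeasureTheory Filter Set

noncomputable section

variable {Ω : Type*}

/-- The increment of the process `M` over the interval `(s, ·]`:  `ˢM_t = M_t - M_{t ∧ s}`. -/
def incr (M : ℝ → Ω → ℝ) (s t : ℝ) (ω : Ω) : ℝ := M t ω - M (min t s) ω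

/-- A real function is càdlàg : right-continuous with left limits. -/
def Cadlag (f : ℝ → ℝ) : Prop :=
  (∀ t, ContinuousWithinAt f (Set.Ici t) t) ∧
    ∀ t : ℝ, ∃ l, Tendsto f (nhdsWithin t (Set.Iio t)) (nhds l)

/-- The jump `ΔM_t(ω) = M_t(ω) - M_{t-}(ω)`. -/
def jump (M : ℝ → Ω → ℝ) (ω : Ω) (t : ℝ) : ℝ :=
  M t ω - Function.leftLim (fun u => M u ω) t

/-- A filtration indexed by `ℝ` is right-continuous. -/
def RightContinuousFiltration {m : MeasurableSpace Ω} (ℱ : Filtration ℝ m) : Prop :=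
  ∀ t : ℝ, (ℱ t : MeasurableSpace Ω) = ⨅ (u : ℝ) (_ : t < u), (ℱ u : MeasurableSpace Ω)

/-- Each `ℱ t` contains all `μ`-null sets. -/
def CompleteFiltration {m : MeasurableSpace Ω} (ℱ : Filtration ℝ m) (μ : Measure Ω) : Prop :=
  ∀ (t : ℝ) (s : Set Ω), μ s = 0 → MeasurableSet[ℱ t] s

/-- A martingale in the sense of the paper: adapted, integrable, with the martingale property. -/
def IsMart {m : MeasurableSpace Ω} (ℱ : Filtration ℝ m) (μ : Measure Ω) (M : ℝ → Ω → ℝ) : Prop :=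
  Martingale M ℱ μ ∧ ∀ t, Integrable (M t) μ

/-- A square integrable martingale. -/
def IsSqMart {m : MeasurableSpace Ω} (ℱ : Filtration ℝ m) (μ : Measure Ω)
    (M : ℝ → Ω → ℝ) : Prop :=
  IsMart ℱ μ M ∧ ∀ t, MemLp (M t) 2 μ

/-- An increment martingale: a càdlàg process all of whose increment processes are
martingales. -/
def IsIncMart {m : MeasurableSpace Ω} (ℱ : Filtration ℝ m) (μ : Measure Ω)
    (M : ℝ → Ω → ℝ) : Prop :=
  (∀ ω, Cadlag fun t => M t ω) ∧ ∀ s : ℝ, IsMart ℱ μ (incr M s)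

/-- An increment square integrable martingale. -/
def IsIncSqMart {m : MeasurableSpace Ω} (ℱ : Filtration ℝ m) (μ : Measure Ω)
    (M : ℝ → Ω → ℝ) : Prop :=
  (∀ ω, Cadlag fun t => M t ω) ∧ ∀ s : ℝ, IsSqMart ℱ μ (incr M s)

/-- The process `M` stopped at the (finite) random time `τ`. -/
def stopped (M : ℝ → Ω → ℝ) (τ : Ω → ℝ) : ℝ → Ω → ℝ := fun t ω => M (min t (τ ω)) ω

/-- A localizing sequence of real-valued stopping times. -/
def Localizing {m : MeasurableSpace Ω} (ℱ : Filtration ℝ m) (μ : Measure Ω)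
    (σ : ℕ → Ω → ℝ) : Prop :=
  (∀ n, IsStoppingTime ℱ (fun ω => (σ n ω : WithTop ℝ))) ∧ (∀ ω, Monotone fun n => σ n ω) ∧
    ∀ᵐ ω ∂μ, Tendsto (fun n => σ n ω) atTop atTop

/-- A local martingale indexed by `ℝ`. -/
def IsLocalMart {m : MeasurableSpace Ω} (ℱ : Filtration ℝ m) (μ : Measure Ω)
    (M : ℝ → Ω → ℝ) : Prop :=
  ∃ σ : ℕ → Ω → ℝ, Localizing ℱ μ σ ∧ ∀ n, IsMart ℱ μ (stopped M (σ n))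

/-- A locally square integrable martingale indexed by `ℝ`. -/
def IsLocSqMart {m : MeasurableSpace Ω} (ℱ : Filtration ℝ m) (μ : Measure Ω)
    (M : ℝ → Ω → ℝ) : Prop :=
  ∃ σ : ℕ → Ω → ℝ, Localizing ℱ μ σ ∧ ∀ n, IsSqMart ℱ μ (stopped M (σ n))

/-- An increment local martingale: every increment process is adapted and a local
martingale (with a localizing sequence possibly depending on `s`). -/
def IsIncLocalMart {m : MeasurableSpace Ω} (ℱ : Filtration ℝ m) (μ : Measure Ω)
    (M : ℝ → Ω → ℝ) : Prop :=
  (∀ ω, Cadlag fun t => M t ω) ∧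
    ∀ s : ℝ, Adapted ℱ (incr M s) ∧ IsLocalMart ℱ μ (incr M s)

/-- An increment locally square integrable martingale. -/
def IsIncLocSqMart {m : MeasurableSpace Ω} (ℱ : Filtration ℝ m) (μ : Measure Ω)
    (M : ℝ → Ω → ℝ) : Prop :=
  (∀ ω, Cadlag fun t => M t ω) ∧
    ∀ s : ℝ, Adapted ℱ (incr M s) ∧ IsLocSqMart ℱ μ (incr M s)

/-- A stopping time with values in `(-∞, ∞]` (encoded in `EReal`, `⊥` excluded separately). -/
def IsStoppingTimeE {m : MeasurableSpace Ω} (ℱ : Filtration ℝ m) (τ : Ω → EReal) : Prop :=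
  ∀ t : ℝ, MeasurableSet[ℱ t] {ω | τ ω ≤ (t : EReal)}

/-- The process `M` stopped at the `EReal`-valued random time `τ`. -/
def stoppedE (M : ℝ → Ω → ℝ) (τ : Ω → EReal) : ℝ → Ω → ℝ :=
  fun t ω => M ((min (t : EReal) (τ ω)).toReal) ω

/-- The process `M`, extended to `-∞` by `Z` and stopped at the `EReal`-valued time `τ`,
as a process indexed by `EReal` (only the values on `[-∞, ∞)` are relevant). -/
def stopE' (M : ℝ → Ω → ℝ) (Z : Ω → ℝ) (τ : Ω → EReal) (t : EReal) (ω : Ω) : ℝ :=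
  if min t (τ ω) = ⊥ then Z ω else M ((min t (τ ω)).toReal) ω

/-- The filtration extended to the index `-∞` by `ℱ_{-∞} = ⨅ t, ℱ t`. -/
def FE {m : MeasurableSpace Ω} (ℱ : Filtration ℝ m) (t : EReal) : MeasurableSpace Ω :=
  if t = ⊥ then ⨅ u : ℝ, (ℱ u : MeasurableSpace Ω) else ℱ t.toReal

/-- A martingale indexed by `[-∞, ∞)` with respect to the extended filtration. -/
def IsMartE {m : MeasurableSpace Ω} (ℱ : Filtration ℝ m) (μ : Measure Ω)
    (N : EReal → Ω → ℝ) : Prop :=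
  (∀ t : EReal, t ≠ ⊤ → StronglyMeasurable[FE ℱ t] (N t)) ∧
  (∀ t : EReal, t ≠ ⊤ → Integrable (N t) μ) ∧
  ∀ s t : EReal, s ≤ t → t ≠ ⊤ → μ[N t | FE ℱ s] =ᵐ[μ] N s

/-- The predictable σ-algebra on `ℝ × Ω`, generated by the simple predictable sets
`B × C` with `C ∈ ℱ t` and `B ⊆ (t, ∞)` a bounded Borel set. -/
def predictableSigma {m : MeasurableSpace Ω} (ℱ : Filtration ℝ m) :
    MeasurableSpace (ℝ × Ω) :=
  MeasurableSpace.generateFrom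
    {A | ∃ (t : ℝ) (B : Set ℝ) (C : Set Ω), B ⊆ Set.Ioi t ∧ MeasurableSet B ∧
      Bornology.IsBounded B ∧ MeasurableSet[ℱ t] C ∧ A = B ×ˢ C}

/-- A predictable process. -/
def PredictableProc {m : MeasurableSpace Ω} (ℱ : Filtration ℝ m) (X : ℝ → Ω → ℝ) : Prop :=
  @Measurable (ℝ × Ω) ℝ (predictableSigma ℱ) _ fun p => X p.1 p.2

/-- The process `X` is associated with the family of increment processes `I`. -/
def Assoc {m : MeasurableSpace Ω} (μ : Measure Ω) (I : ℝ → ℝ → Ω → ℝ) (X : ℝ → Ω → ℝ) : Prop :=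
  ∀ s : ℝ, ∀ᵐ ω ∂μ, ∀ t, X t ω - X (min t s) ω = I s t ω

/-- `V` is a quadratic variation of the increment local martingale `M`:
`V ∈ A₀(ℱ)`, `ΔV = (ΔM)²` and `(ˢM)² - ˢV` is a local martingale for every `s`. -/
def IsQuadVar {m : MeasurableSpace Ω} (ℱ : Filtration ℝ m) (μ : Measure Ω)
    (M V : ℝ → Ω → ℝ) : Prop :=
  (∀ ω, Monotone fun t => V t ω) ∧ (∀ ω, Cadlag fun t => V t ω) ∧ Adapted ℱ V ∧
  (∀ᵐ ω ∂μ, Tendsto (fun t => V t ω) atBot (nhds 0)) ∧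
  (∀ᵐ ω ∂μ, ∀ t, jump V ω t = (jump M ω t) ^ 2) ∧
  ∀ s : ℝ, IsLocalMart ℱ μ fun t ω => (incr M s t ω) ^ 2 - incr V s t ω

/-- `V` is a predictable quadratic variation of `M`: an increasing predictable càdlàg
adapted locally integrable process with `V_{-∞} = 0` a.s. such that `(ˢM)² - ˢV` is a
local martingale for every `s`. -/
def IsPredQV {m : MeasurableSpace Ω} (ℱ : Filtration ℝ m) (μ : Measure Ω)
    (M V : ℝ → Ω → ℝ) : Prop :=
  (∀ ω, Monotone fun t => V t ω) ∧ (∀ ω, Cadlag fun t => V t ω) ∧ Adapted ℱ V ∧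
  PredictableProc ℱ V ∧
  (∀ᵐ ω ∂μ, Tendsto (fun t => V t ω) atBot (nhds 0)) ∧
  (∃ σ : ℕ → Ω → ℝ, Localizing ℱ μ σ ∧ ∀ n t, Integrable (stopped V (σ n) t) μ) ∧
  ∀ s : ℝ, IsLocalMart ℱ μ fun t ω => (incr M s t ω) ^ 2 - incr V s t ω

/-- `Mc` is a continuous martingale component of the increment local martingale `M`:
it is continuous, its increments are adapted local martingales, and the increments of
`M - Mc` are purely discontinuous local martingales (orthogonal to every continuous
local martingale vanishing at `-∞`). -/
def IsContMartPart {m : MeasurableSpace Ω} (ℱ : Filtration ℝ m) (μ : Measure Ω)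
    (M Mc : ℝ → Ω → ℝ) : Prop :=
  (∀ ω, Continuous fun t => Mc t ω) ∧
  (∀ s : ℝ, Adapted ℱ (incr Mc s)) ∧
  (∀ s : ℝ, IsLocalMart ℱ μ (incr Mc s)) ∧
  (∀ s : ℝ, IsLocalMart ℱ μ fun t ω => incr M s t ω - incr Mc s t ω) ∧
  ∀ s : ℝ, ∀ N : ℝ → Ω → ℝ, (∀ ω, Continuous fun t => N t ω) → IsLocalMart ℱ μ N →
    (∀ᵐ ω ∂μ, Tendsto (fun t => N t ω) atBot (nhds 0)) →
    IsLocalMart ℱ μ fun t ω => (incr M s t ω - incr Mc s t ω) * N t ω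

/-- The Lebesgue–Stieltjes measure on `ℝ` induced by the (pathwise increasing,
right-continuous) process `V` at the outcome `ω`. -/
def stj (V : ℝ → Ω → ℝ) (hm : ∀ ω, Monotone fun t => V t ω)
    (hrc : ∀ ω t, ContinuousWithinAt (fun u => V u ω) (Set.Ici t) t) (ω : Ω) : Measure ℝ :=
  StieltjesFunction.measure ⟨fun t => V t ω, hm ω, hrc ω⟩

end

section Aux

open MeasureTheory Filter Set Topology
open scoped ENNReal

variable {Ω : Type*} {m : MeasurableSpace Ω} {μ : Measure Ω} [IsProbabilityMeasure μ]
  {ℱ : Filtration ℝ m} {N : ℝ → Ω → ℝ}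

/-- coercion of a real-valued random time to `WithTop ℝ`. -/
def wt (ρ : Ω → ℝ) (ω : Ω) : WithTop ℝ := ρ ω

lemma sv_ct (N : ℝ → Ω → ℝ) (ρ : Ω → ℝ) (ω : Ω) : stoppedValue N (wt ρ) ω = N (ρ ω) ω := rfl

lemma wt_cnt {ρ : Ω → ℝ} (hcnt : (Set.range ρ).Countable) : (Set.range (wt ρ)).Countable := by
  have := hcnt.image (fun x : ℝ => (x : WithTop ℝ))
  rwa [← Set.range_comp] at this

lemma wt_le {ρ : Ω → ℝ} {t : ℝ} (hle : ∀ ω, ρ ω ≤ t) : ∀ ω, wt ρ ω ≤ (t : WithTop ℝ) :=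
  fun ω => WithTop.coe_le_coe.mpr (hle ω)

lemma wt_min_const {ρ : Ω → ℝ} (hρ : IsStoppingTime ℱ (wt ρ)) (c : ℝ) :
    IsStoppingTime ℱ (wt fun ω => min (ρ ω) c) := by
  have h : (wt fun ω => min (ρ ω) c) = fun ω => min (wt ρ ω) (c : WithTop ℝ) := by
    funext ω
    simp [wt, WithTop.coe_min]
  rw [h]
  exact hρ.min_const c

lemma aux_rep (hN : Martingale N ℱ μ) {ρ : Ω → ℝ} (hρ : IsStoppingTime ℱ (wt ρ))
    (hcnt : (Set.range ρ).Countable) {t : ℝ} (hle : ∀ ω, ρ ω ≤ t) :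
    stoppedValue N (wt ρ) =ᵐ[μ] μ[N t | hρ.measurableSpace] :=
  hN.stoppedValue_ae_eq_condExp_of_le_const_of_countable_range hρ (wt_le hle) (wt_cnt hcnt)

lemma aux_int (hN : Martingale N ℱ μ) {ρ : Ω → ℝ} (hρ : IsStoppingTime ℱ (wt ρ))
    (hcnt : (Set.range ρ).Countable) {t : ℝ} (hle : ∀ ω, ρ ω ≤ t) :
    Integrable (stoppedValue N (wt ρ)) μ :=
  integrable_condExp.congr (aux_rep hN hρ hcnt hle).symm

lemma aux_sm (hN : StronglyAdapted ℱ N) {ρ : Ω → ℝ} (hρ : IsStoppingTime ℱ (wt ρ))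
    (hcnt : (Set.range ρ).Countable) {t : ℝ} (hle : ∀ ω, ρ ω ≤ t) :
    StronglyMeasurable[ℱ t] (stoppedValue N (wt ρ)) := by
  refine Measurable.stronglyMeasurable (fun B hB => ?_)
  rw [show stoppedValue N (wt ρ) = fun ω => N (ρ ω) ω from funext (sv_ct N ρ)]
  have : (fun ω => N (ρ ω) ω) ⁻¹' B = ⋃ v ∈ Set.range ρ, ({ω | ρ ω = v} ∩ (N v) ⁻¹' B) := by
    ext ω
    simp only [Set.mem_iUnion, Set.mem_inter_iff, Set.mem_preimage, Set.mem_setOf_eq,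
      Set.mem_range, exists_prop]
    constructor
    · intro h; exact ⟨ρ ω, ⟨ω, rfl⟩, rfl, h⟩
    · rintro ⟨v, -, rfl, h⟩; exact h
  rw [this]
  refine MeasurableSet.biUnion hcnt fun v hv => ?_
  obtain ⟨ω₀, rfl⟩ := hv
  exact ((ℱ.mono (hle ω₀) _ (by simpa only [wt, WithTop.coe_inj] using hρ.measurableSet_eq_of_countable_range (wt_cnt hcnt) (ρ ω₀))).inter
    (ℱ.mono (hle ω₀) _ ((hN (ρ ω₀)).measurable hB)))

lemma aux_min_cnt {ρ : Ω → ℝ} (hcnt : (Set.range ρ).Countable) (a : ℝ) :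
    (Set.range fun ω => min (ρ ω) a).Countable := by
  refine Set.Countable.mono ?_ (hcnt.insert a)
  rintro x ⟨ω, rfl⟩
  rcases le_total (ρ ω) a with h | h
  · exact Set.mem_insert_iff.mpr (Or.inr ⟨ω, (min_eq_left h).symm⟩)
  · exact Set.mem_insert_iff.mpr (Or.inl (min_eq_right h))

lemma aux_disc (hN : Martingale N ℱ μ) (n : ℕ) (t : ℝ) (π : Ω → ℝ)
    (hπ : IsStoppingTime ℱ (wt π)) (hcnt : (Set.range π).Countable) (hle : ∀ ω, π ω ≤ t)
    (hgrid : ∀ ω a, a < π ω → min (((⌊a * 2 ^ n⌋ : ℝ) + 1) / 2 ^ n) t ≤ π ω) :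
    ∀ a, a ≤ t →
      μ[stoppedValue N (wt π) - stoppedValue N (wt fun ω => min (π ω) a) | ℱ a] =ᵐ[μ] 0 := by
  have hpow : (0 : ℝ) < 2 ^ n := by positivity
  have htriv : ∀ a : ℝ, (∀ ω, π ω ≤ a) →
      μ[stoppedValue N (wt π) - stoppedValue N (wt fun ω => min (π ω) a) | ℱ a] =ᵐ[μ] 0 := by
    intro a ha
    have : (fun ω => min (π ω) a) = π := funext fun ω => min_eq_left (ha ω)
    rw [this, sub_self, condExp_zero]
  suffices H : ∀ j : ℕ, ∀ a, a ≤ t → (⌈t * 2 ^ n⌉ - ⌊a * 2 ^ n⌋).toNat ≤ j →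
      μ[stoppedValue N (wt π) - stoppedValue N (wt fun ω => min (π ω) a) | ℱ a] =ᵐ[μ] 0 by
    exact fun a ha => H _ a ha le_rfl
  intro j
  induction j with
  | zero =>
    intro a hat hj
    have hfl : ⌈t * 2 ^ n⌉ ≤ ⌊a * 2 ^ n⌋ := by omega
    have hta : t ≤ a := by
      have h1 : t * 2 ^ n ≤ a * 2 ^ n :=
        le_trans (Int.le_ceil _) (le_trans (by exact_mod_cast hfl) (Int.floor_le _))
      exact le_of_mul_le_mul_right h1 hpow
    exact htriv a fun ω => (hle ω).trans hta
  | succ j ih =>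
    intro a hat hj
    by_cases hta : t ≤ a
    · exact htriv a fun ω => (hle ω).trans hta
    push_neg at hta
    set b' : ℝ := ((⌊a * 2 ^ n⌋ : ℝ) + 1) / 2 ^ n with hb'def
    set b : ℝ := min b' t with hbdef
    have hab' : a < b' := by
      rw [hb'def, lt_div_iff₀ hpow]
      exact Int.lt_floor_add_one _
    have hab : a < b := lt_min hab' hta
    have hbt : b ≤ t := min_le_right _ _
    -- integrability of the stopped values
    have hint : ∀ c : ℝ, Integrable (stoppedValue N (wt fun ω => min (π ω) c)) μ := fun c =>
      aux_int hN (wt_min_const hπ c) (aux_min_cnt hcnt c) (fun ω => (min_le_left _ _).trans (hle ω))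
    have hintπ : Integrable (stoppedValue N (wt π)) μ := aux_int hN hπ hcnt hle
    -- the measurable set {a < π}
    have hA : MeasurableSet[ℱ a] {ω | a < π ω} := by
      have : {ω | a < π ω} = {ω | π ω ≤ a}ᶜ := by ext ω; simp [not_le]
      have hπa : MeasurableSet[ℱ a] {ω | π ω ≤ a} := by
        simpa only [wt, WithTop.coe_le_coe] using hπ a
      rw [this]; exact hπa.compl
    -- pointwise decomposition
    have hkey : (stoppedValue N (wt π) - stoppedValue N (wt fun ω => min (π ω) a)) =
        (stoppedValue N (wt π) - stoppedValue N (wt fun ω => min (π ω) b))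
          + ({ω | a < π ω}.indicator (fun ω => N b ω - N a ω)) := by
      funext ω
      by_cases h : a < π ω
      · have h2 : b ≤ π ω := hgrid ω a h
        simp only [Pi.add_apply, Pi.sub_apply, sv_ct,
          Set.indicator_of_mem (show ω ∈ {ω | a < π ω} from h), min_eq_right h2,
          min_eq_right h.le]
        ring
      · push_neg at h
        simp only [Pi.add_apply, Pi.sub_apply, sv_ct,
          Set.indicator_of_notMem (show ω ∉ {ω | a < π ω} from not_lt.mpr h),
          min_eq_left h, min_eq_left (h.trans hab.le)]
        ring
    rw [hkey]
    have hi1 : Integrable (stoppedValue N (wt π) - stoppedValue N (wt fun ω => min (π ω) b)) μ :=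
      hintπ.sub (hint b)
    have hi2 : Integrable ({ω | a < π ω}.indicator (fun ω => N b ω - N a ω)) μ :=
      ((hN.integrable b).sub (hN.integrable a)).indicator (ℱ.le a _ hA)
    refine (condExp_add hi1 hi2 (ℱ a)).trans ?_
    -- first term is a.e. zero
    have hfirst : μ[stoppedValue N (wt π) - stoppedValue N (wt fun ω => min (π ω) b) | ℱ a] =ᵐ[μ] 0 := by
      by_cases hb't : t ≤ b'
      · have hbt' : b = t := min_eq_right hb't
        have : (fun ω => min (π ω) b) = π := funext fun ω => min_eq_left (hbt' ▸ hle ω)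
        rw [this, sub_self, condExp_zero]
      · push_neg at hb't
        have hbb' : b = b' := min_eq_left hb't.le
        have hfloor : ⌊b * 2 ^ n⌋ = ⌊a * 2 ^ n⌋ + 1 := by
          have : b * 2 ^ n = ((⌊a * 2 ^ n⌋ + 1 : ℤ) : ℝ) := by
            rw [hbb', hb'def, div_mul_cancel₀ _ (ne_of_gt hpow)]
            push_cast; ring
          rw [this, Int.floor_intCast]
        have hcount : (⌈t * 2 ^ n⌉ - ⌊b * 2 ^ n⌋).toNat ≤ j := by
          rw [hfloor]; omega
        have ihb := ih b hbt hcount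
        calc μ[stoppedValue N (wt π) - stoppedValue N (wt fun ω => min (π ω) b) | ℱ a]
            =ᵐ[μ] μ[μ[stoppedValue N (wt π) - stoppedValue N (wt fun ω => min (π ω) b) | ℱ b] | ℱ a] :=
              (condExp_condExp_of_le (ℱ.mono hab.le) (ℱ.le b)).symm
          _ =ᵐ[μ] μ[(0 : Ω → ℝ) | ℱ a] := condExp_congr_ae ihb
          _ =ᵐ[μ] 0 := by rw [condExp_zero]
    -- second term is a.e. zero
    have hsecond : μ[{ω | a < π ω}.indicator (fun ω => N b ω - N a ω) | ℱ a] =ᵐ[μ] 0 := by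
      have hz : μ[(fun ω => N b ω - N a ω) | ℱ a] =ᵐ[μ] 0 := by
        show μ[N b - N a | ℱ a] =ᵐ[μ] 0
        have h1 := condExp_sub (m := ℱ a) (hN.integrable b) (hN.integrable a)
        have h2 := hN.condExp_ae_eq hab.le
        have h3 : μ[N a | ℱ a] = N a :=
          condExp_of_stronglyMeasurable (ℱ.le a) (hN.stronglyAdapted a) (hN.integrable a)
        filter_upwards [h1, h2] with ω hω1 hω2
        simp only [Pi.sub_apply, Pi.zero_apply] at *
        rw [hω1, hω2, h3]
        ring
      refine (condExp_indicator ((hN.integrable b).sub (hN.integrable a)) hA).trans ?_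
      filter_upwards [hz] with ω hω
      simp only [Set.indicator_apply, Pi.zero_apply] at *
      split_ifs with h
      · exact hω
      · rfl
    filter_upwards [hfirst, hsecond] with ω h1 h2
    simp only [Pi.add_apply, Pi.zero_apply] at *
    rw [h1, h2, add_zero]

lemma aux_key (hN : Martingale N ℱ μ)
    (hrcN : ∀ ω x, ContinuousWithinAt (fun u => N u ω) (Set.Ici x) x)
    (r : ℝ → Ω → ℝ)
    (h1 : ∀ t ω, r t ω ≤ t)
    (h2 : ∀ s t : ℝ, s ≤ t → ∀ ω, r s ω = min (r t ω) s)
    (h3 : ∀ t u : ℝ, u < t → MeasurableSet[ℱ u] {ω | r t ω ≤ u}) :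
    IsMart ℱ μ fun t ω => N t ω - N (r t ω) ω := by
  classical
  set π : ℕ → ℝ → Ω → ℝ := fun n t ω => min ((⌈r t ω * 2 ^ n⌉ : ℝ) / 2 ^ n) t with hπdef
  have hpow : ∀ n : ℕ, (0 : ℝ) < 2 ^ n := fun n => by positivity
  have hπ_ge : ∀ n t ω, r t ω ≤ π n t ω := fun n t ω =>
    le_min ((le_div_iff₀ (hpow n)).mpr (Int.le_ceil _)) (h1 t ω)
  have hπ_le : ∀ n t ω, π n t ω ≤ t := fun n t ω => min_le_right _ _
  have hπ_ub : ∀ n t ω, π n t ω ≤ r t ω + ((2 : ℝ) ^ n)⁻¹ := by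
    intro n t ω
    refine (min_le_left _ _).trans ?_
    rw [div_le_iff₀ (hpow n)]
    have h := (Int.ceil_lt_add_one (r t ω * 2 ^ n)).le
    have : (r t ω + ((2 : ℝ) ^ n)⁻¹) * 2 ^ n = r t ω * 2 ^ n + 1 := by
      field_simp
    rw [this]; exact h
  have hπ_tendsto : ∀ t ω, Tendsto (fun n => π n t ω) atTop (𝓝 (r t ω)) := by
    intro t ω
    have hub : Tendsto (fun n : ℕ => r t ω + ((2 : ℝ) ^ n)⁻¹) atTop (𝓝 (r t ω)) := by
      have h0 : Tendsto (fun n : ℕ => ((2 : ℝ) ^ n)⁻¹) atTop (𝓝 0) := by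
        simp_rw [← inv_pow]
        exact tendsto_pow_atTop_nhds_zero_of_lt_one (by norm_num) (by norm_num)
      simpa using tendsto_const_nhds.add h0
    exact tendsto_of_tendsto_of_tendsto_of_le_of_le tendsto_const_nhds hub
      (fun n => hπ_ge n t ω) (fun n => hπ_ub n t ω)
  have hπN_tendsto : ∀ t ω, Tendsto (fun n => N (π n t ω) ω) atTop (𝓝 (N (r t ω) ω)) := by
    intro t ω
    refine Filter.Tendsto.comp (hrcN ω (r t ω)) ?_
    exact tendsto_nhdsWithin_of_tendsto_nhds_of_eventually_within _ (hπ_tendsto t ω)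
      (Eventually.of_forall fun n => hπ_ge n t ω)
  have hπ_st : ∀ n t, IsStoppingTime ℱ (wt (π n t)) := by
    intro n t u
    simp only [wt, WithTop.coe_le_coe]
    by_cases htu : t ≤ u
    · have : {ω | π n t ω ≤ u} = Set.univ := by
        ext ω; simp only [Set.mem_setOf_eq, Set.mem_univ, iff_true]
        exact (hπ_le n t ω).trans htu
      rw [this]; exact MeasurableSet.univ
    · push_neg at htu
      set v : ℝ := ((⌊u * 2 ^ n⌋ : ℝ)) / 2 ^ n with hvdef
      have hvu : v ≤ u := (div_le_iff₀ (hpow n)).mpr (Int.floor_le _)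
      have hset : {ω | π n t ω ≤ u} = {ω | r t ω ≤ v} := by
        ext ω
        simp only [Set.mem_setOf_eq]
        constructor
        · intro h
          have hc : (⌈r t ω * 2 ^ n⌉ : ℝ) / 2 ^ n ≤ u := by
            by_contra hc
            exact absurd h (lt_min (not_le.mp hc) htu).not_ge
          have hc1 : (⌈r t ω * 2 ^ n⌉ : ℤ) ≤ ⌊u * 2 ^ n⌋ :=
            Int.le_floor.mpr ((div_le_iff₀ (hpow n)).mp hc)
          have hc2 : r t ω * 2 ^ n ≤ ((⌊u * 2 ^ n⌋ : ℤ) : ℝ) := by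
            refine le_trans (Int.le_ceil _) ?_
            exact_mod_cast hc1
          exact (le_div_iff₀ (hpow n)).mpr hc2
        · intro h
          have hc1 : r t ω * 2 ^ n ≤ ((⌊u * 2 ^ n⌋ : ℤ) : ℝ) := (le_div_iff₀ (hpow n)).mp h
          have hc2 : (⌈r t ω * 2 ^ n⌉ : ℤ) ≤ ⌊u * 2 ^ n⌋ := Int.ceil_le.mpr hc1
          have hc3 : (⌈r t ω * 2 ^ n⌉ : ℝ) ≤ u * 2 ^ n :=
            le_trans (by exact_mod_cast hc2) (Int.floor_le _)
          exact min_le_of_left_le ((div_le_iff₀ (hpow n)).mpr hc3)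
      rw [hset]
      exact ℱ.mono hvu _ (h3 t v (lt_of_le_of_lt hvu htu))
  have hπ_cnt : ∀ n t, (Set.range (π n t)).Countable := by
    intro n t
    refine Set.Countable.mono ?_ (Set.countable_range fun k : ℤ => min ((k : ℝ) / 2 ^ n) t)
    rintro x ⟨ω, rfl⟩
    exact ⟨⌈r t ω * 2 ^ n⌉, rfl⟩
  have hπ_grid : ∀ n t ω a, a < π n t ω →
      min (((⌊a * 2 ^ n⌋ : ℝ) + 1) / 2 ^ n) t ≤ π n t ω := by
    intro n t ω a ha
    rcases lt_min_iff.mp ha with ⟨hac, hat⟩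
    refine min_le_min ?_ le_rfl
    have h1' : a * 2 ^ n < (⌈r t ω * 2 ^ n⌉ : ℝ) := (lt_div_iff₀ (hpow n)).mp hac
    have h2' : ⌊a * 2 ^ n⌋ + 1 ≤ ⌈r t ω * 2 ^ n⌉ := Int.add_one_le_iff.mpr (Int.floor_lt.mpr h1')
    have h3' : ((⌊a * 2 ^ n⌋ : ℝ) + 1) ≤ (⌈r t ω * 2 ^ n⌉ : ℝ) := by exact_mod_cast h2'
    exact div_le_div_of_nonneg_right h3' (hpow n).le |>.trans le_rfl
  have hπ_eq : ∀ s t : ℝ, s ≤ t → ∀ n, π n s = fun ω => min (π n t ω) s := by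
    intro s t hst n
    funext ω
    have hrs : r s ω = min (r t ω) s := h2 s t hst ω
    have hmono : Monotone fun x : ℝ => (⌈x * 2 ^ n⌉ : ℝ) / 2 ^ n := by
      intro x y hxy
      have : (⌈x * 2 ^ n⌉ : ℤ) ≤ ⌈y * 2 ^ n⌉ :=
        Int.ceil_le_ceil (mul_le_mul_of_nonneg_right hxy (hpow n).le)
      exact div_le_div_of_nonneg_right (by exact_mod_cast this) (hpow n).le
    have hmin : (⌈(min (r t ω) s) * 2 ^ n⌉ : ℝ) / 2 ^ n =
        min ((⌈r t ω * 2 ^ n⌉ : ℝ) / 2 ^ n) ((⌈s * 2 ^ n⌉ : ℝ) / 2 ^ n) := hmono.map_min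
    have hs_le : s ≤ (⌈s * 2 ^ n⌉ : ℝ) / 2 ^ n := (le_div_iff₀ (hpow n)).mpr (Int.le_ceil _)
    show min ((⌈r s ω * 2 ^ n⌉ : ℝ) / 2 ^ n) s = min (π n t ω) s
    rw [hrs, hmin, hπdef]
    simp only []
    rw [min_assoc, min_eq_right hs_le, min_assoc, min_eq_right hst]
  -- stopped values
  set Y : ℝ → Ω → ℝ := fun t => stoppedValue N (wt (r t)) with hYdef
  have hSV_rep : ∀ n t, stoppedValue N (wt (π n t)) =ᵐ[μ] μ[N t | (hπ_st n t).measurableSpace] :=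
    fun n t => aux_rep hN (hπ_st n t) (hπ_cnt n t) (hπ_le n t)
  have hSV_int : ∀ n t, Integrable (stoppedValue N (wt (π n t))) μ :=
    fun n t => aux_int hN (hπ_st n t) (hπ_cnt n t) (hπ_le n t)
  have hSV_sm : ∀ n t, StronglyMeasurable[ℱ t] (stoppedValue N (wt (π n t))) :=
    fun n t => aux_sm hN.stronglyAdapted (hπ_st n t) (hπ_cnt n t) (hπ_le n t)
  have hY_tendsto : ∀ t ω, Tendsto (fun n => stoppedValue N (wt (π n t)) ω) atTop (𝓝 (Y t ω)) :=
    fun t ω => hπN_tendsto t ω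
  have hY_sm : ∀ t, StronglyMeasurable[ℱ t] (Y t) := by
    intro t
    refine stronglyMeasurable_of_tendsto (f := fun n => stoppedValue N (wt (π n t))) atTop
      (fun n => hSV_sm n t) ?_
    exact tendsto_pi_nhds.mpr fun ω => hY_tendsto t ω
  have hY_eLp : ∀ t, eLpNorm (Y t) 1 μ ≤ eLpNorm (N t) 1 μ := by
    intro t
    have hbd : ∀ n, eLpNorm (stoppedValue N (wt (π n t))) 1 μ ≤ eLpNorm (N t) 1 μ := fun n => by
      rw [eLpNorm_congr_ae (hSV_rep n t)]
      exact eLpNorm_one_condExp_le_eLpNorm _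
    have hmeas : ∀ n, Measurable fun ω => (‖stoppedValue N (wt (π n t)) ω‖₊ : ℝ≥0∞) := fun n =>
      ((hSV_sm n t).mono (ℱ.le t)).measurable.nnnorm.coe_nnreal_ennreal
    calc eLpNorm (Y t) 1 μ = ∫⁻ ω, ‖Y t ω‖₊ ∂μ := eLpNorm_one_eq_lintegral_enorm
      _ = ∫⁻ ω, liminf (fun n => (‖stoppedValue N (wt (π n t)) ω‖₊ : ℝ≥0∞)) atTop ∂μ := by
          refine lintegral_congr fun ω => ?_
          exact (Filter.Tendsto.liminf_eq (ENNReal.tendsto_coe.mpr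
            ((continuous_nnnorm.tendsto _).comp (hY_tendsto t ω)))).symm
      _ ≤ liminf (fun n => ∫⁻ ω, ‖stoppedValue N (wt (π n t)) ω‖₊ ∂μ) atTop :=
          lintegral_liminf_le hmeas
      _ ≤ eLpNorm (N t) 1 μ := by
          have hbd' : ∀ n, (∫⁻ ω, (‖stoppedValue N (wt (π n t)) ω‖₊ : ℝ≥0∞) ∂μ)
              ≤ eLpNorm (N t) 1 μ := fun n => by
            exact eLpNorm_one_eq_lintegral_enorm.symm.trans_le (hbd n)
          have hll := Filter.liminf_le_liminf (Filter.Eventually.of_forall hbd')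
            (f := (atTop : Filter ℕ))
          rwa [Filter.liminf_const] at hll
  have hY_mem : ∀ t, MemLp (Y t) 1 μ := fun t =>
    ⟨((hY_sm t).mono (ℱ.le t)).aestronglyMeasurable,
      lt_of_le_of_lt (hY_eLp t) (memLp_one_iff_integrable.2 (hN.integrable t)).2⟩
  have hY_int : ∀ t, Integrable (Y t) μ := fun t => memLp_one_iff_integrable.1 (hY_mem t)
  have hui : ∀ t, UnifIntegrable (fun n => stoppedValue N (wt (π n t))) 1 μ := by
    intro t
    have h := ((hN.integrable t).uniformIntegrable_condExp
      (fun n => (hπ_st n t).measurableSpace_le_of_le (wt_le (hπ_le n t)))).2.1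
    exact h.ae_eq fun n => (hSV_rep n t).symm
  have hL1 : ∀ t, Tendsto (fun n => eLpNorm (stoppedValue N (wt (π n t)) - Y t) 1 μ) atTop (𝓝 0) := by
    intro t
    refine tendsto_Lp_finite_of_tendstoInMeasure le_rfl ENNReal.one_ne_top
      (fun n => ((hSV_sm n t).mono (ℱ.le t)).aestronglyMeasurable) (hY_mem t) (hui t) ?_
    exact tendstoInMeasure_of_tendsto_ae
      (fun n => ((hSV_sm n t).mono (ℱ.le t)).aestronglyMeasurable)
      (Filter.Eventually.of_forall fun ω => hY_tendsto t ω)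
  -- the martingale property for Y
  have hYmart : ∀ s t : ℝ, s ≤ t → μ[Y t | ℱ s] =ᵐ[μ] Y s := by
    intro s t hst
    have hcond_n : ∀ n, μ[stoppedValue N (wt (π n t)) | ℱ s] =ᵐ[μ] stoppedValue N (wt (π n s)) := by
      intro n
      have hd := aux_disc hN n t (π n t) (hπ_st n t) (hπ_cnt n t) (hπ_le n t)
        (hπ_grid n t) s hst
      have hds : stoppedValue N (wt fun ω => min (π n t ω) s) = stoppedValue N (wt (π n s)) := by
        rw [hπ_eq s t hst n]
      rw [hds] at hd
      have hsub := condExp_sub (m := ℱ s) (hSV_int n t) (hSV_int n s)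
      have hself : μ[stoppedValue N (wt (π n s)) | ℱ s] = stoppedValue N (wt (π n s)) :=
        condExp_of_stronglyMeasurable (ℱ.le s) (hSV_sm n s) (hSV_int n s)
      filter_upwards [hd, hsub] with ω h1' h2'
      simp only [Pi.sub_apply, Pi.zero_apply] at *
      rw [h2', hself] at h1'
      linarith
    have hQ : eLpNorm (μ[Y t | ℱ s] - Y s) 1 μ = 0 := by
      have hub : ∀ n, eLpNorm (μ[Y t | ℱ s] - Y s) 1 μ ≤
          eLpNorm (Y t - stoppedValue N (wt (π n t))) 1 μ
            + eLpNorm (stoppedValue N (wt (π n s)) - Y s) 1 μ := by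
        intro n
        have e1 : μ[Y t | ℱ s] - Y s =ᵐ[μ]
            μ[Y t - stoppedValue N (wt (π n t)) | ℱ s]
              + (stoppedValue N (wt (π n s)) - Y s) := by
          have h4 := condExp_sub (m := ℱ s) (hY_int t) (hSV_int n t)
          filter_upwards [h4, hcond_n n] with ω hω1 hω2
          simp only [Pi.add_apply, Pi.sub_apply] at *
          linarith
        calc eLpNorm (μ[Y t | ℱ s] - Y s) 1 μ
            = eLpNorm (μ[Y t - stoppedValue N (wt (π n t)) | ℱ s]
                + (stoppedValue N (wt (π n s)) - Y s)) 1 μ := eLpNorm_congr_ae e1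
          _ ≤ eLpNorm (μ[Y t - stoppedValue N (wt (π n t)) | ℱ s]) 1 μ
                + eLpNorm (stoppedValue N (wt (π n s)) - Y s) 1 μ :=
              eLpNorm_add_le
                (stronglyMeasurable_condExp.mono (ℱ.le s)).aestronglyMeasurable
                (((hSV_sm n s).mono (ℱ.le s)).aestronglyMeasurable.sub
                  ((hY_sm s).mono (ℱ.le s)).aestronglyMeasurable) le_rfl
          _ ≤ eLpNorm (Y t - stoppedValue N (wt (π n t))) 1 μ
                + eLpNorm (stoppedValue N (wt (π n s)) - Y s) 1 μ :=
              add_le_add (eLpNorm_one_condExp_le_eLpNorm _) le_rfl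
      have hlim : Tendsto (fun n => eLpNorm (Y t - stoppedValue N (wt (π n t))) 1 μ
          + eLpNorm (stoppedValue N (wt (π n s)) - Y s) 1 μ) atTop (𝓝 0) := by
        have h1' := hL1 t
        have h2' := hL1 s
        simp_rw [eLpNorm_sub_comm (Y t)]
        simpa using h1'.add h2'
      exact le_zero_iff.mp (ge_of_tendsto' hlim hub)
    have hsm : AEStronglyMeasurable (μ[Y t | ℱ s] - Y s) μ :=
      (stronglyMeasurable_condExp.mono (ℱ.le s)).aestronglyMeasurable.sub
        ((hY_sm s).mono (ℱ.le s)).aestronglyMeasurable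
    have := (eLpNorm_eq_zero_iff hsm one_ne_zero).mp hQ
    filter_upwards [this] with ω hω
    simp only [Pi.sub_apply, Pi.zero_apply] at hω
    linarith
  refine ⟨⟨fun t => (hN.stronglyAdapted t).sub (hY_sm t), fun s t hst => ?_⟩,
    fun t => (hN.integrable t).sub (hY_int t)⟩
  have h5 := condExp_sub (m := ℱ s) (hN.integrable t) (hY_int t)
  have h6 := hN.condExp_ae_eq hst
  have h7 := hYmart s t hst
  show μ[N t - Y t | ℱ s] =ᵐ[μ] N s - Y s
  filter_upwards [h5, h6, h7] with ω hω1 hω2 hω3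
  simp only [Pi.sub_apply] at *
  rw [hω1, hω2, hω3]

end Aux

/-- if `M` is an increment martingale and `τ` is a stopping time bounded
below by `s₀ ∈ ℝ`, then `(M_t - M_{t∧τ})_t` is a martingale. -/
theorem stmt0 {Ω : Type*} {m : MeasurableSpace Ω} {μ : Measure Ω} [IsProbabilityMeasure μ]
    (ℱ : Filtration ℝ m) (hrc : RightContinuousFiltration ℱ) (hcpl : CompleteFiltration ℱ μ)
    (M : ℝ → Ω → ℝ) (hM : IsIncMart ℱ μ M)
    (τ : Ω → EReal) (hτ : IsStoppingTimeE ℱ τ)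
    (s₀ : ℝ) (hbdd : ∀ ω, (s₀ : EReal) ≤ τ ω) :
    IsMart ℱ μ fun t ω => M t ω - stoppedE M τ t ω := by
  obtain ⟨hcad, hmart⟩ := hM
  have hNmart : Martingale (incr M s₀) ℱ μ := (hmart s₀).1
  have hrcN : ∀ ω x, ContinuousWithinAt (fun u => incr M s₀ u ω) (Set.Ici x) x := by
    intro ω x
    have hc1 := (hcad ω).1 x
    have hc2 : ContinuousWithinAt (fun u => M (min u s₀) ω) (Set.Ici x) x := by
      have hmaps : Set.MapsTo (fun u : ℝ => min u s₀) (Set.Ici x) (Set.Ici (min x s₀)) :=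
        fun u hu => Set.mem_Ici.mpr (min_le_min (Set.mem_Ici.mp hu) le_rfl)
      exact ContinuousWithinAt.comp (g := fun v => M v ω) (f := fun u : ℝ => min u s₀)
        ((hcad ω).1 (min x s₀))
        ((continuous_id.min continuous_const).continuousWithinAt) hmaps
    exact hc1.sub hc2
  set r : ℝ → Ω → ℝ := fun t ω => (min (t : EReal) (τ ω)).toReal with hrdef
  have hne : ∀ (t : ℝ) ω, min (t : EReal) (τ ω) ≠ ⊥ ∧ min (t : EReal) (τ ω) ≠ ⊤ := by
    intro t ω
    constructor
    · refine ne_of_gt (lt_of_lt_of_le (EReal.bot_lt_coe (min t s₀)) ?_)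
      refine le_min ?_ ?_
      · exact_mod_cast min_le_left t s₀
      · exact le_trans (by exact_mod_cast min_le_right t s₀) (hbdd ω)
    · exact ne_of_lt (lt_of_le_of_lt (min_le_left _ _) (EReal.coe_lt_top t))
  have hcoe : ∀ (t : ℝ) ω, ((r t ω : ℝ) : EReal) = min (t : EReal) (τ ω) :=
    fun t ω => EReal.coe_toReal (hne t ω).2 (hne t ω).1
  have h1 : ∀ (t : ℝ) ω, r t ω ≤ t := by
    intro t ω
    have := EReal.toReal_le_toReal (min_le_left (t : EReal) (τ ω)) (hne t ω).1
      (EReal.coe_ne_top t)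
    rwa [EReal.toReal_coe] at this
  have hlow : ∀ (t : ℝ) ω, min t s₀ ≤ r t ω := by
    intro t ω
    have hle : ((min t s₀ : ℝ) : EReal) ≤ min (t : EReal) (τ ω) := by
      refine le_min ?_ ?_
      · exact_mod_cast min_le_left t s₀
      · exact le_trans (by exact_mod_cast min_le_right t s₀) (hbdd ω)
    have := EReal.toReal_le_toReal hle (EReal.coe_ne_bot _) (hne t ω).2
    rwa [EReal.toReal_coe] at this
  have h2 : ∀ s t : ℝ, s ≤ t → ∀ ω, r s ω = min (r t ω) s := by
    intro s t hst ω
    have hm : min (s : EReal) (τ ω) = min (min (t : EReal) (τ ω)) (s : EReal) := by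
      rw [min_assoc, min_comm (τ ω) (s : EReal), ← min_assoc,
        min_eq_right (show (s : EReal) ≤ (t : EReal) from by exact_mod_cast hst)]
    show (min (s : EReal) (τ ω)).toReal = min ((min (t : EReal) (τ ω)).toReal) s
    rw [hm, ← hcoe t ω]
    have : min ((r t ω : ℝ) : EReal) (s : EReal) = ((min (r t ω) s : ℝ) : EReal) := by
      rcases le_total (r t ω) s with h | h
      · rw [min_eq_left (by exact_mod_cast h), min_eq_left h]
      · rw [min_eq_right (by exact_mod_cast h), min_eq_right h]
    rw [this, EReal.toReal_coe, EReal.toReal_coe]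
  have h3 : ∀ t u : ℝ, u < t → MeasurableSet[ℱ u] {ω | r t ω ≤ u} := by
    intro t u hut
    have hset : {ω | r t ω ≤ u} = {ω | τ ω ≤ (u : EReal)} := by
      ext ω
      simp only [Set.mem_setOf_eq]
      constructor
      · intro h
        have h' : min (t : EReal) (τ ω) ≤ (u : EReal) := by
          rw [← hcoe t ω]; exact_mod_cast h
        rcases min_le_iff.mp h' with h'' | h''
        · exact absurd (by exact_mod_cast h'' : t ≤ u) hut.not_ge
        · exact h''
      · intro h
        have h' : min (t : EReal) (τ ω) ≤ (u : EReal) := min_le_of_right_le h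
        have := EReal.toReal_le_toReal h' (hne t ω).1 (EReal.coe_ne_top u)
        rwa [EReal.toReal_coe] at this
    rw [hset]
    exact hτ u
  have hkey := aux_key hNmart hrcN r h1 h2 h3
  have hfun : (fun t ω => M t ω - stoppedE M τ t ω)
      = fun t ω => incr M s₀ t ω - incr M s₀ (r t ω) ω := by
    funext t ω
    have hmin : min (r t ω) s₀ = min t s₀ :=
      le_antisymm (min_le_min (h1 t ω) le_rfl) (le_min (hlow t ω) (min_le_right _ _))
    show M t ω - M (r t ω) ω
      = (M t ω - M (min t s₀) ω) - (M (r t ω) ω - M (min (r t ω) s₀) ω)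
    rw [hmin]
    ring
  rw [hfun]
  exact hkey
end

section
/- If M = K + N is the decomposition of a square integrable increment martingale with E[N_t|F_t] = 0, then E[K_t N_t] = 0 for all t, E[M_t²] = E[K_t²] + E[N_t²], and t ↦ E[N_t²] is nonincreasing; more precisely E[N_t²] = E[N_s²] − E[(N_t − N_s)²] for s ≤ t. -/
open MeasureTheory Filter Set

lemma aux_integrable_mul {Ω : Type*} {m0 : MeasurableSpace Ω} {μ : MeasureTheory.Measure Ω}
    {f g : Ω → ℝ} (hf : MemLp f 2 μ) (hg : MemLp g 2 μ) :
    Integrable (fun ω => f ω * g ω) μ := by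
  refine Integrable.mono' (hf.integrable_sq.add hg.integrable_sq)
    (hf.aestronglyMeasurable.mul hg.aestronglyMeasurable) ?_
  filter_upwards with ω
  have h1 : ‖f ω * g ω‖ = |f ω| * |g ω| := by rw [norm_mul]; rfl
  simp only [Pi.add_apply, h1]
  nlinarith [sq_nonneg (|f ω| - |g ω|), sq_abs (f ω), sq_abs (g ω), abs_nonneg (f ω),
    abs_nonneg (g ω)]

lemma aux_memℒp_condexp {Ω : Type*} {m' m0 : MeasurableSpace Ω} {μ : MeasureTheory.Measure Ω}
    [IsFiniteMeasure μ] (hm' : m' ≤ m0)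
    {f : Ω → ℝ} (hf : MemLp f 2 μ) : MemLp (μ[f|m']) 2 μ := by
  have hgmem : MemLp ((condExpL2 ℝ ℝ hm' (hf.toLp f) : Lp ℝ 2 μ) : Ω → ℝ) 2 μ :=
    Lp.memLp _
  have hint : Integrable ((condExpL2 ℝ ℝ hm' (hf.toLp f) : Lp ℝ 2 μ) : Ω → ℝ) μ :=
    MemLp.integrable one_le_two hgmem
  refine hgmem.ae_eq ?_
  refine ae_eq_condExp_of_forall_setIntegral_eq hm' ?_ ?_ ?_ ?_
  · exact MemLp.integrable one_le_two hf
  · exact fun s _ _ => hint.integrableOn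
  · intro s hs hμs
    rw [integral_condExpL2_eq hm' (hf.toLp f) hs hμs.ne]
    exact setIntegral_congr_ae (hm' s hs) ((hf.coeFn_toLp).mono fun x hx _ => hx)
  · exact aestronglyMeasurable_condExpL2 hm' _

/-- for the decomposition `M = K + N` of a square integrable increment
martingale with `K_t = E[M_t | ℱ_t]`, one has `E[K_t N_t] = 0`,
`E[M_t²] = E[K_t²] + E[N_t²]`, `t ↦ E[N_t²]` is nonincreasing, and
`E[N_t²] = E[N_s²] - E[(N_t - N_s)²]` for `s ≤ t`. -/
theorem stmt3 {Ω : Type*} {m : MeasurableSpace Ω} {μ : Measure Ω} [IsProbabilityMeasure μ]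
    (ℱ : Filtration ℝ m) (hrc : RightContinuousFiltration ℱ) (hcpl : CompleteFiltration ℱ μ)
    (M K N : ℝ → Ω → ℝ) (hM : IsIncMart ℱ μ M)
    (hL2 : ∀ t, MemLp (M t) 2 μ)
    (hK : ∀ t : ℝ, K t =ᵐ[μ] μ[M t | ℱ t])
    (hN : ∀ t ω, N t ω = M t ω - K t ω) :
    (∀ t, ∫ ω, K t ω * N t ω ∂μ = 0) ∧
    (∀ t, ∫ ω, (M t ω) ^ 2 ∂μ = ∫ ω, (K t ω) ^ 2 ∂μ + ∫ ω, (N t ω) ^ 2 ∂μ) ∧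
    (Antitone fun t => ∫ ω, (N t ω) ^ 2 ∂μ) ∧
    ∀ s t : ℝ, s ≤ t →
      ∫ ω, (N t ω) ^ 2 ∂μ = ∫ ω, (N s ω) ^ 2 ∂μ - ∫ ω, (N t ω - N s ω) ^ 2 ∂μ := by
  have hKL2 : ∀ t, MemLp (K t) 2 μ := fun t =>
    (aux_memℒp_condexp (ℱ.le t) (hL2 t)).ae_eq (hK t).symm
  have hNL2 : ∀ t, MemLp (N t) 2 μ := by
    intro t
    refine ((hL2 t).sub (hKL2 t)).ae_eq ?_
    filter_upwards with ω
    exact (hN t ω).symm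
  have hcondN : ∀ t, μ[N t | ℱ t] =ᵐ[μ] 0 := by
    intro t
    have h1 : N t =ᵐ[μ] (M t - fun ω => (μ[M t | ℱ t]) ω) := by
      filter_upwards [hK t] with ω hω
      simp only [Pi.sub_apply, hN t ω, hω]
    calc μ[N t | ℱ t]
        =ᵐ[μ] μ[M t - fun ω => (μ[M t | ℱ t]) ω | ℱ t] := condExp_congr_ae h1
      _ =ᵐ[μ] μ[M t | ℱ t] - μ[fun ω => (μ[M t | ℱ t]) ω | ℱ t] :=
          condExp_sub (MemLp.integrable one_le_two (hL2 t)) integrable_condExp (ℱ t)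
      _ =ᵐ[μ] μ[M t | ℱ t] - μ[M t | ℱ t] := by
          filter_upwards [condExp_condExp_of_le (le_refl (ℱ t)) (ℱ.le t) (f := M t)] with ω hω
          simp only [Pi.sub_apply]
          rw [hω]
      _ =ᵐ[μ] 0 := by
          filter_upwards with ω
          simp
  have key : ∀ (t : ℝ) (h : Ω → ℝ), MemLp h 2 μ → AEStronglyMeasurable[ℱ t] h μ →
      ∫ ω, N t ω * h ω ∂μ = 0 := by
    intro t h hh hhm
    set h' : Ω → ℝ := hhm.mk h with hh'def
    have hmeq : h =ᵐ[μ] h' := hhm.ae_eq_mk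
    have hh'm : StronglyMeasurable[ℱ t] h' := hhm.stronglyMeasurable_mk
    have hh'2 : MemLp h' 2 μ := hh.ae_eq hmeq
    have hint : Integrable (h' * N t) μ := by
      have := aux_integrable_mul hh'2 (hNL2 t)
      exact this
    have hpull : μ[h' * N t | ℱ t] =ᵐ[μ] h' * μ[N t | ℱ t] :=
      condExp_mul_of_stronglyMeasurable_left hh'm hint (MemLp.integrable one_le_two (hNL2 t))
    have hzero : μ[h' * N t | ℱ t] =ᵐ[μ] 0 := by
      filter_upwards [hpull, hcondN t] with ω h1 h2
      simp only [Pi.mul_apply] at h1 ⊢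
      rw [h1, h2]
      simp
    have h2 : ∫ ω, N t ω * h ω ∂μ = ∫ ω, (h' * N t) ω ∂μ := by
      refine integral_congr_ae ?_
      filter_upwards [hmeq] with ω hω
      simp only [Pi.mul_apply, hω, mul_comm]
    rw [h2, ← integral_condExp (ℱ.le t), integral_congr_ae hzero]
    simp
  have hpart1 : ∀ t, ∫ ω, K t ω * N t ω ∂μ = 0 := by
    intro t
    have hKm : AEStronglyMeasurable[ℱ t] (K t) μ :=
      (stronglyMeasurable_condExp.aestronglyMeasurable).congr (hK t).symm
    have := key t (K t) (hKL2 t) hKm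
    rw [← this]
    exact integral_congr_ae (by filter_upwards with ω; ring)
  have hpart4 : ∀ s t : ℝ, s ≤ t →
      ∫ ω, (N t ω) ^ 2 ∂μ = ∫ ω, (N s ω) ^ 2 ∂μ - ∫ ω, (N t ω - N s ω) ^ 2 ∂μ := by
    intro s t hst
    have hd2 : MemLp (fun ω => N t ω - N s ω) 2 μ := by
      have := (hNL2 t).sub (hNL2 s)
      exact this
    have hmeas : AEStronglyMeasurable[ℱ t] (fun ω => N t ω - N s ω) μ := by
      have h1 : StronglyMeasurable[ℱ t] (incr M s t) := (hM.2 s).1.1 t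
      have h2 : StronglyMeasurable[ℱ t] (μ[M t | ℱ t]) := stronglyMeasurable_condExp
      have h3 : StronglyMeasurable[ℱ t] (μ[M s | ℱ s]) :=
        stronglyMeasurable_condExp.mono (ℱ.mono hst)
      refine AEStronglyMeasurable.congr
        (((h1.sub h2).add h3).aestronglyMeasurable) ?_
      filter_upwards [hK t, hK s] with ω hω1 hω2
      simp only [Pi.add_apply, Pi.sub_apply, incr, min_eq_right hst, hN t ω, hN s ω, hω1, hω2]
      ring
    have horth : ∫ ω, N t ω * (N t ω - N s ω) ∂μ = 0 := key t _ hd2 hmeas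
    have hit : Integrable (fun ω => (N t ω) ^ 2) μ := (hNL2 t).integrable_sq
    have his : Integrable (fun ω => (N s ω) ^ 2) μ := (hNL2 s).integrable_sq
    have hmul : Integrable (fun ω => N t ω * (N t ω - N s ω)) μ :=
      aux_integrable_mul (hNL2 t) hd2
    have hid : (fun ω => (N t ω - N s ω) ^ 2) =
        fun ω => ((N s ω) ^ 2 - (N t ω) ^ 2) + 2 * (N t ω * (N t ω - N s ω)) := by
      funext ω; ring
    have hsum1 : Integrable (fun ω => (N s ω) ^ 2 - (N t ω) ^ 2) μ := his.sub hit
    have hsum2 : Integrable (fun ω => 2 * (N t ω * (N t ω - N s ω))) μ := hmul.const_mul 2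
    rw [hid, integral_add hsum1 hsum2, integral_sub his hit, integral_const_mul, horth]
    ring
  have hpart2 : ∀ t, ∫ ω, (M t ω) ^ 2 ∂μ = ∫ ω, (K t ω) ^ 2 ∂μ + ∫ ω, (N t ω) ^ 2 ∂μ := by
    intro t
    have hmul : Integrable (fun ω => K t ω * N t ω) μ :=
      aux_integrable_mul (hKL2 t) (hNL2 t)
    have hid : (fun ω => (M t ω) ^ 2) =
        fun ω => ((K t ω) ^ 2 + 2 * (K t ω * N t ω)) + (N t ω) ^ 2 := by
      funext ω
      have hMeq : M t ω = K t ω + N t ω := by rw [hN t ω]; ring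
      rw [hMeq]; ring
    have hb : Integrable (fun ω => 2 * (K t ω * N t ω)) μ := hmul.const_mul 2
    have ha : Integrable (fun ω => (K t ω) ^ 2 + 2 * (K t ω * N t ω)) μ :=
      (hKL2 t).integrable_sq.add hb
    rw [hid, integral_add ha (hNL2 t).integrable_sq,
      integral_add (hKL2 t).integrable_sq hb, integral_const_mul, hpart1 t]
    ring
  refine ⟨hpart1, hpart2, ?_, hpart4⟩
  intro s t hst
  have h4 := hpart4 s t hst
  have h0 : 0 ≤ ∫ ω, (N t ω - N s ω) ^ 2 ∂μ := integral_nonneg fun ω => sq_nonneg _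
  simp only []
  linarith
end
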